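/- arXiv:2204.12446 — 2 statements merged into one kernel-verified Lean document; each statement's English description precedes it below -/
import Mathlib

section
/- For step sizes η_t ≤ C/t with Cβ > 0, one has ∑_{t=1}^T η_t ∏_{j=t+1}^T (1 + β η_j)^2 ≤ C e^{2Cβ} T^{2Cβ} (1 + 1/(2Cβ)). -/
open Real Finset

lemma log_lb (x : ℝ) (hx : 0 < x) : 1 - 1/x ≤ Real.log x := by
  have h := Real.log_le_sub_one_of_pos (show (0:ℝ) < 1/x by positivity)
  rw [Real.log_div one_ne_zero (ne_of_gt hx), Real.log_one] at h
  linarith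

lemma harm_tail (t : ℕ) (ht : 1 ≤ t) (T : ℕ) (hT : t ≤ T) :
    ∑ j ∈ Finset.Icc (t+1) T, (1/(j:ℝ)) ≤ Real.log T - Real.log t := by
  induction T, hT using Nat.le_induction with
  | base => simp
  | succ T hT ih =>
    rw [Finset.sum_Icc_succ_top (by omega)]
    have hT0 : (0:ℝ) < T := by
      have : (1:ℕ) ≤ T := le_trans ht hT
      exact_mod_cast Nat.lt_of_lt_of_le Nat.zero_lt_one this
    have key : 1/((T:ℝ)+1) ≤ Real.log ((T:ℝ)+1) - Real.log T := by
      have h1 := log_lb (((T:ℝ)+1)/T) (by positivity)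
      rw [Real.log_div (by positivity) (by positivity)] at h1
      have h2 : 1 - 1/(((T:ℝ)+1)/T) = 1/((T:ℝ)+1) := by
        field_simp
        ring
      linarith [h2 ▸ h1]
    push_cast
    push_cast at ih
    linarith

lemma sum_rpow_le (s : ℝ) (hs : 0 < s) (T : ℕ) (hT : 1 ≤ T) :
    ∑ t ∈ Finset.Icc 1 T, (t:ℝ)^(-(1+s)) ≤ 1 + (1 - (T:ℝ)^(-s))/s := by
  induction T, hT using Nat.le_induction with
  | base => simp
  | succ T hT ih =>
    rw [Finset.sum_Icc_succ_top (by omega)]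
    have hT0 : (0:ℝ) < T := by exact_mod_cast Nat.lt_of_lt_of_le Nat.zero_lt_one hT
    set a : ℝ := (T:ℝ) with ha
    have ha1 : (0:ℝ) < a + 1 := by linarith
    -- log lower bound
    have hlog : 1/(a+1) ≤ Real.log ((a+1)/a) := by
      have h1 := log_lb ((a+1)/a) (by positivity)
      have h2 : 1 - 1/((a+1)/a) = 1/(a+1) := by field_simp; ring
      linarith [h2 ▸ h1]
    -- ((a+1)/a)^s ≥ 1 + s/(a+1)
    have hpow : 1 + s/(a+1) ≤ ((a+1)/a)^s := by
      rw [Real.rpow_def_of_pos (by positivity)]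
      have h1 : s/(a+1) + 1 ≤ Real.log ((a+1)/a) * s + 1 := by
        have := mul_le_mul_of_nonneg_right hlog (le_of_lt hs)
        rw [div_mul_eq_mul_div, one_mul] at this
        linarith
      calc 1 + s/(a+1) = s/(a+1) + 1 := by ring
        _ ≤ Real.log ((a+1)/a) * s + 1 := h1
        _ ≤ Real.exp (Real.log ((a+1)/a) * s) := Real.add_one_le_exp _
    -- key: s * (a+1)^(-(1+s)) ≤ a^(-s) - (a+1)^(-s)
    have e1 : ((a+1)/a)^s = (a+1)^s / a^s := Real.div_rpow (by positivity) (by positivity) s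
    have e2 : (a+1)^(-s) = ((a+1)^s)⁻¹ := Real.rpow_neg (by positivity) s
    have e3 : a^(-s) = (a^s)⁻¹ := Real.rpow_neg (by positivity) s
    have e4 : (a+1)^(-(1+s)) = ((a+1)^s)⁻¹ * (a+1)⁻¹ := by
      rw [show -(1+s) = -s + (-1) by ring, Real.rpow_add ha1, Real.rpow_neg_one, ← e2, e2]
    have hps : (0:ℝ) < (a+1)^s := Real.rpow_pos_of_pos ha1 s
    have hpa : (0:ℝ) < a^s := Real.rpow_pos_of_pos hT0 s
    have hpow' : (1 + s/(a+1)) * a^s ≤ (a+1)^s := by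
      rw [e1] at hpow
      exact (le_div_iff₀ hpa).mp hpow
    have hpow'' : a^s*(a+1) + s*a^s ≤ (a+1)^s*(a+1) := by
      have h := mul_le_mul_of_nonneg_right hpow' ha1.le
      have he : (1 + s/(a+1)) * a^s * (a+1) = a^s*(a+1) + s*a^s := by
        field_simp
      linarith [he ▸ h]
    have key : s * (a+1)^(-(1+s)) ≤ a^(-s) - (a+1)^(-s) := by
      rw [e2, e3, e4]
      rw [← sub_nonneg]
      have expand : (a^s)⁻¹ - ((a+1)^s)⁻¹ - s * (((a+1)^s)⁻¹ * (a+1)⁻¹) =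
          (((a+1)^s * (a+1) - (a^s * (a+1) + a^s * s)) ) / (a^s * (a+1)^s * (a+1)) := by
        field_simp
        ring
      rw [expand]
      apply div_nonneg _ (by positivity)
      nlinarith [hpow'']
    have h5 : ((a+1))^(-(1+s)) ≤ (a^(-s) - (a+1)^(-s))/s := by
      rw [le_div_iff₀ hs]; linarith [key]
    have hadd : (1 - a^(-s))/s + (a^(-s) - (a+1)^(-s))/s = (1 - (a+1)^(-s))/s := by
      ring
    push_cast
    rw [← ha]
    linarith [ih, h5, hadd]

theorem sum_prod_decreasing_step_bound (β C : ℝ) (T : ℕ) (η : ℕ → ℝ)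
    (hβ : 0 < β) (hC : 0 < C) (hT : 1 ≤ T)
    (hη0 : ∀ t ∈ Finset.Icc 1 T, 0 ≤ η t)
    (hη : ∀ t ∈ Finset.Icc 1 T, η t ≤ C / t) :
    ∑ t ∈ Finset.Icc 1 T, η t * ∏ j ∈ Finset.Icc (t + 1) T, (1 + β * η j) ^ 2 ≤
      C * Real.exp (2 * C * β) * (T : ℝ) ^ (2 * C * β) * (1 + 1 / (2 * C * β)) := by
  set s := 2 * C * β with hsdef
  have hs : 0 < s := by positivity
  have hT0 : (0:ℝ) < T := by exact_mod_cast Nat.lt_of_lt_of_le Nat.zero_lt_one hT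
  have key : ∀ t ∈ Finset.Icc 1 T,
      η t * ∏ j ∈ Finset.Icc (t + 1) T, (1 + β * η j) ^ 2 ≤
        C * (T:ℝ)^s * (t:ℝ)^(-(1+s)) := by
    intro t htmem
    obtain ⟨ht1, htT⟩ := Finset.mem_Icc.mp htmem
    have ht0 : (0:ℝ) < t := by exact_mod_cast Nat.lt_of_lt_of_le Nat.zero_lt_one ht1
    have hsub : Finset.Icc (t+1) T ⊆ Finset.Icc 1 T := by
      apply Finset.Icc_subset_Icc_left; omega
    have hprod : ∏ j ∈ Finset.Icc (t+1) T, (1 + β * η j) ^ 2 ≤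
        Real.exp (2 * β * ∑ j ∈ Finset.Icc (t+1) T, η j) := by
      have : ∀ j ∈ Finset.Icc (t+1) T, (1 + β * η j)^2 ≤ Real.exp (2 * β * η j) := by
        intro j hj
        have h0 := hη0 j (hsub hj)
        have h1 : 1 + β * η j ≤ Real.exp (β * η j) := by
          have := Real.add_one_le_exp (β * η j); linarith
        have h2 : (0:ℝ) ≤ 1 + β * η j := by positivity
        calc (1 + β * η j)^2 ≤ (Real.exp (β * η j))^2 := by nlinarith
          _ = Real.exp (2 * (β * η j)) := by rw [← Real.exp_nat_mul]; push_cast; ring_nf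
          _ = Real.exp (2 * β * η j) := by ring_nf
      calc ∏ j ∈ Finset.Icc (t+1) T, (1 + β * η j) ^ 2
          ≤ ∏ j ∈ Finset.Icc (t+1) T, Real.exp (2 * β * η j) := by
            apply Finset.prod_le_prod (fun j hj => by positivity) this
        _ = Real.exp (∑ j ∈ Finset.Icc (t+1) T, 2 * β * η j) := (Real.exp_sum _ _).symm
        _ = Real.exp (2 * β * ∑ j ∈ Finset.Icc (t+1) T, η j) := by
            rw [← Finset.mul_sum]
    have hsum : ∑ j ∈ Finset.Icc (t+1) T, η j ≤ C * (Real.log T - Real.log t) := by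
      calc ∑ j ∈ Finset.Icc (t+1) T, η j ≤ ∑ j ∈ Finset.Icc (t+1) T, C * (1/(j:ℝ)) := by
            apply Finset.sum_le_sum
            intro j hj
            have := hη j (hsub hj)
            rw [mul_one_div]; exact this
        _ = C * ∑ j ∈ Finset.Icc (t+1) T, (1/(j:ℝ)) := by rw [Finset.mul_sum]
        _ ≤ C * (Real.log T - Real.log t) := by
            apply mul_le_mul_of_nonneg_left (harm_tail t ht1 T htT) (le_of_lt hC)
    have hexp : Real.exp (2 * β * ∑ j ∈ Finset.Icc (t+1) T, η j) ≤
        (T:ℝ)^s * (t:ℝ)^(-s) := by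
      have h1 : 2 * β * ∑ j ∈ Finset.Icc (t+1) T, η j ≤ s * (Real.log T - Real.log t) := by
        have := mul_le_mul_of_nonneg_left hsum (show (0:ℝ) ≤ 2 * β by positivity)
        calc 2 * β * ∑ j ∈ Finset.Icc (t+1) T, η j
            ≤ 2 * β * (C * (Real.log T - Real.log t)) := this
          _ = s * (Real.log T - Real.log t) := by rw [hsdef]; ring
      calc Real.exp (2 * β * ∑ j ∈ Finset.Icc (t+1) T, η j)
          ≤ Real.exp (s * (Real.log T - Real.log t)) := Real.exp_le_exp.mpr h1
        _ = (T:ℝ)^s * (t:ℝ)^(-s) := by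
            rw [Real.rpow_def_of_pos hT0, Real.rpow_def_of_pos ht0, ← Real.exp_add]
            ring_nf
    have hηt0 := hη0 t htmem
    have hηt := hη t htmem
    have hprodnn : (0:ℝ) ≤ ∏ j ∈ Finset.Icc (t+1) T, (1 + β * η j) ^ 2 :=
      Finset.prod_nonneg (fun j hj => by positivity)
    have hTs : (0:ℝ) < (T:ℝ)^s := Real.rpow_pos_of_pos hT0 s
    have hts : (0:ℝ) < (t:ℝ)^(-s) := Real.rpow_pos_of_pos ht0 _
    calc η t * ∏ j ∈ Finset.Icc (t+1) T, (1 + β * η j) ^ 2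
        ≤ (C/t) * ((T:ℝ)^s * (t:ℝ)^(-s)) := by
          apply mul_le_mul hηt (le_trans hprod hexp) hprodnn (by positivity)
      _ = C * (T:ℝ)^s * (t:ℝ)^(-(1+s)) := by
          rw [show -(1+s) = -1 + (-s) by ring, Real.rpow_add ht0, Real.rpow_neg_one]
          field_simp
  have hsumbound : ∑ t ∈ Finset.Icc 1 T, (t:ℝ)^(-(1+s)) ≤ 1 + 1/s := by
    have h1 := sum_rpow_le s hs T hT
    have h2 : (0:ℝ) ≤ (T:ℝ)^(-s) := le_of_lt (Real.rpow_pos_of_pos hT0 _)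
    have h3 : (1 - (T:ℝ)^(-s))/s ≤ 1/s := by gcongr; linarith
    linarith
  have hnn : (0:ℝ) ≤ C * (T:ℝ)^s := by positivity
  have hexp1 : (1:ℝ) ≤ Real.exp s := Real.one_le_exp (le_of_lt hs)
  calc ∑ t ∈ Finset.Icc 1 T, η t * ∏ j ∈ Finset.Icc (t + 1) T, (1 + β * η j) ^ 2
      ≤ ∑ t ∈ Finset.Icc 1 T, C * (T:ℝ)^s * (t:ℝ)^(-(1+s)) := Finset.sum_le_sum key
    _ = C * (T:ℝ)^s * ∑ t ∈ Finset.Icc 1 T, (t:ℝ)^(-(1+s)) := by rw [Finset.mul_sum]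
    _ ≤ C * (T:ℝ)^s * (1 + 1/s) := by
        apply mul_le_mul_of_nonneg_left hsumbound hnn
    _ ≤ C * Real.exp s * (T:ℝ)^s * (1 + 1/s) := by
        have h1s : (0:ℝ) ≤ 1 + 1/s := by positivity
        have h2 := mul_le_mul_of_nonneg_right (mul_le_mul_of_nonneg_left hexp1 hnn) h1s
        linarith [h2]
end

section
/- For step sizes η_t ≤ C/t with Cβ > 0, one has ∑_{t=1}^T η_t ∏_{j=t+1}^T (1 + β η_j)^2 ≤ C e^{2Cβ} T^{2Cβ} log(eT), where log denotes the natural logarithm. -/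
open Real Finset

lemma harmonic_le_log (T : ℕ) (hT : 1 ≤ T) :
    ∑ t ∈ Finset.Icc 1 T, (1 : ℝ) / t ≤ 1 + Real.log T := by
  induction T with
  | zero => omega
  | succ n ih =>
    rcases Nat.eq_or_lt_of_le hT with h | h
    · simp [← h]
    · have hn : 1 ≤ n := by omega
      have hsum := ih hn
      have hstep : (1 : ℝ) / (n + 1) ≤ Real.log (n + 1) - Real.log n := by
        have hn0 : (0 : ℝ) < n := by exact_mod_cast hn
        have hx : (0 : ℝ) < (n : ℝ) / (n + 1) := by positivity
        have := Real.log_le_sub_one_of_pos hx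
        have hdiv : Real.log ((n : ℝ) / (n + 1)) = Real.log n - Real.log (n + 1) :=
          Real.log_div (by positivity) (by positivity)
        rw [hdiv] at this
        have h1 : (n : ℝ) / (n + 1) - 1 = -(1 / (n + 1)) := by
          field_simp
          ring
        rw [h1] at this
        linarith
      rw [show n + 1 = n.succ from rfl,
        Finset.sum_Icc_succ_top (by omega : 1 ≤ n + 1)]
      push_cast
      push_cast at hstep
      linarith
theorem sum_prod_decreasing_step_bound_log (β C : ℝ) (T : ℕ) (η : ℕ → ℝ)
    (hβ : 0 < β) (hC : 0 < C) (hT : 1 ≤ T)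
    (hη0 : ∀ t ∈ Finset.Icc 1 T, 0 ≤ η t)
    (hη : ∀ t ∈ Finset.Icc 1 T, η t ≤ C / t) :
    ∑ t ∈ Finset.Icc 1 T, η t * ∏ j ∈ Finset.Icc (t + 1) T, (1 + β * η j) ^ 2 ≤
      C * Real.exp (2 * C * β) * (T : ℝ) ^ (2 * C * β) *
        Real.log (Real.exp 1 * T) := by
  have hT0 : (0 : ℝ) < T := by exact_mod_cast Nat.lt_of_lt_of_le Nat.zero_lt_one hT
  have hharm : ∑ t ∈ Finset.Icc 1 T, (1 : ℝ) / t ≤ 1 + Real.log T :=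
    harmonic_le_log T hT
  -- bound on sum of η
  have hsumη : ∀ s : Finset ℕ, s ⊆ Finset.Icc 1 T →
      ∑ j ∈ s, η j ≤ C * (1 + Real.log T) := by
    intro s hs
    calc ∑ j ∈ s, η j ≤ ∑ j ∈ Finset.Icc 1 T, η j :=
          Finset.sum_le_sum_of_subset_of_nonneg hs (fun i hi _ => hη0 i hi)
      _ ≤ ∑ j ∈ Finset.Icc 1 T, C / j := Finset.sum_le_sum hη
      _ = C * ∑ j ∈ Finset.Icc 1 T, (1 : ℝ) / j := by
          rw [Finset.mul_sum]; exact Finset.sum_congr rfl (fun j _ => by ring)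
      _ ≤ C * (1 + Real.log T) := by
          exact mul_le_mul_of_nonneg_left hharm hC.le
  set K := Real.exp (2 * β * (C * (1 + Real.log T))) with hK
  have hprod : ∀ t ∈ Finset.Icc 1 T,
      ∏ j ∈ Finset.Icc (t + 1) T, (1 + β * η j) ^ 2 ≤ K := by
    intro t ht
    have hsub : Finset.Icc (t + 1) T ⊆ Finset.Icc 1 T := by
      intro j hj
      simp only [Finset.mem_Icc] at *
      omega
    calc ∏ j ∈ Finset.Icc (t + 1) T, (1 + β * η j) ^ 2
        ≤ ∏ j ∈ Finset.Icc (t + 1) T, Real.exp (2 * β * η j) := by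
          apply Finset.prod_le_prod
          · intro j hj
            have := hη0 j (hsub hj)
            positivity
          · intro j hj
            have h1 : (1 : ℝ) + β * η j ≤ Real.exp (β * η j) :=
              Real.add_one_le_exp _ |>.trans_eq' (by ring_nf)
            have h0 : (0 : ℝ) ≤ 1 + β * η j := by
              have := hη0 j (hsub hj); positivity
            calc (1 + β * η j) ^ 2 ≤ (Real.exp (β * η j)) ^ 2 := by
                  exact pow_le_pow_left₀ h0 h1 2
              _ = Real.exp (2 * β * η j) := by
                  rw [← Real.exp_nat_mul]; ring_nf
      _ = Real.exp (∑ j ∈ Finset.Icc (t + 1) T, 2 * β * η j) :=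
          (Real.exp_sum _ _).symm
      _ ≤ K := by
          rw [hK]
          apply Real.exp_le_exp.mpr
          rw [← Finset.mul_sum]
          have := hsumη _ hsub
          nlinarith
  have hK0 : 0 < K := Real.exp_pos _
  have hmain : ∑ t ∈ Finset.Icc 1 T, η t * ∏ j ∈ Finset.Icc (t + 1) T, (1 + β * η j) ^ 2
      ≤ K * (C * (1 + Real.log T)) := by
    calc ∑ t ∈ Finset.Icc 1 T, η t * ∏ j ∈ Finset.Icc (t + 1) T, (1 + β * η j) ^ 2
        ≤ ∑ t ∈ Finset.Icc 1 T, η t * K := by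
          apply Finset.sum_le_sum
          intro t ht
          exact mul_le_mul_of_nonneg_left (hprod t ht) (hη0 t ht)
      _ = K * ∑ t ∈ Finset.Icc 1 T, η t := by rw [Finset.mul_sum]; exact Finset.sum_congr rfl (fun _ _ => mul_comm _ _)
      _ ≤ K * (C * (1 + Real.log T)) :=
          mul_le_mul_of_nonneg_left (hsumη _ (Finset.Subset.refl _)) hK0.le
  -- rewrite RHS
  have hlogeT : Real.log (Real.exp 1 * T) = 1 + Real.log T := by
    rw [Real.log_mul (Real.exp_ne_zero 1) (ne_of_gt hT0), Real.log_exp]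
  have hrpow : (T : ℝ) ^ (2 * C * β) = Real.exp (2 * C * β * Real.log T) := by
    rw [Real.rpow_def_of_pos hT0]; ring_nf
  have hKeq : K = Real.exp (2 * C * β) * Real.exp (2 * C * β * Real.log T) := by
    rw [hK, ← Real.exp_add]; ring_nf
  rw [hlogeT, hrpow]
  calc ∑ t ∈ Finset.Icc 1 T, η t * ∏ j ∈ Finset.Icc (t + 1) T, (1 + β * η j) ^ 2
      ≤ K * (C * (1 + Real.log T)) := hmain
    _ = C * Real.exp (2 * C * β) * Real.exp (2 * C * β * Real.log T) * (1 + Real.log T) := by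
        rw [hKeq]; ring
end
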